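/- arXiv:1610.07528 — 2 statements merged into one kernel-verified Lean document; each statement's English description precedes it below -/
import Mathlib

section
/- Let x ∈ ℤ with x ≠ 0 and A = (0 1; 1 x) ∈ GL₂ℤ (an orientation-reversing hyperbolic matrix, det A = −1). Then the subgroup H_A of GL₂ℤ generated by A and −Id acts transitively on the set S_A = {v ∈ ℤ² : ℤv + ℤ(Av) = ℤ²} = {(a,b) ∈ ℤ² : a² + xab − b² = ±1}. -/
open Matrix

abbrev GL2Z := GL (Fin 2) ℤ

/-- `S_A = {v ∈ ℤ² : ℤv + ℤ(Av) = ℤ²}`. -/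
def SA (A : GL2Z) : Set (Fin 2 → ℤ) :=
  {v | Submodule.span ℤ {v, (A : Matrix (Fin 2) (Fin 2) ℤ).mulVec v} = ⊤}

/-- `H_A = ⟨A, -Id⟩ ≤ GL₂ℤ`. -/
def HA (A : GL2Z) : Subgroup GL2Z := Subgroup.closure {A, -1}

private lemma mvA (x : ℤ) (v : Fin 2 → ℤ) :
    (!![(0:ℤ),1;1,x]).mulVec v = ![v 1, v 0 + x * v 1] := by
  funext i; fin_cases i <;> simp [Matrix.mulVec, dotProduct, Fin.sum_univ_two]

private lemma mvAinv (x : ℤ) (v : Fin 2 → ℤ) :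
    (!![(-x:ℤ),1;1,0]).mulVec v = ![-x * v 0 + v 1, v 0] := by
  funext i; fin_cases i <;> simp [Matrix.mulVec, dotProduct, Fin.sum_univ_two]

private lemma memA (A : GL2Z) : A ∈ HA A := Subgroup.subset_closure (Set.mem_insert _ _)

private lemma memNeg (A : GL2Z) : (-1 : GL2Z) ∈ HA A :=
  Subgroup.subset_closure (Set.mem_insert_of_mem _ rfl)

private lemma coeAinv (x : ℤ) (A : GL2Z)
    (hA : (A : Matrix (Fin 2) (Fin 2) ℤ) = !![0, 1; 1, x]) :
    ((A⁻¹ : GL2Z) : Matrix (Fin 2) (Fin 2) ℤ) = !![-x, 1; 1, 0] := by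
  have h1 : (A : Matrix (Fin 2) (Fin 2) ℤ) * !![-x, 1; 1, 0] = 1 := by
    rw [hA]; ext i j; fin_cases i <;> fin_cases j <;>
      simp [Matrix.mul_apply, Fin.sum_univ_two]
  calc ((A⁻¹ : GL2Z) : Matrix (Fin 2) (Fin 2) ℤ)
      = ↑A⁻¹ * ((A : Matrix (Fin 2) (Fin 2) ℤ) * !![-x, 1; 1, 0]) := by rw [h1, mul_one]
    _ = (↑A⁻¹ * (A : Matrix (Fin 2) (Fin 2) ℤ)) * !![-x, 1; 1, 0] := by rw [mul_assoc]
    _ = !![-x, 1; 1, 0] := by rw [Units.inv_mul, one_mul]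

private lemma reach (x : ℤ) (hx : x ≠ 0) (A : GL2Z)
    (hA : (A : Matrix (Fin 2) (Fin 2) ℤ) = !![0, 1; 1, x]) :
    ∀ n : ℕ, ∀ v : Fin 2 → ℤ,
      (v 0) ^ 2 + (v 1) ^ 2 ≤ (n : ℤ) →
      ((v 0) ^ 2 + x * v 0 * v 1 - (v 1) ^ 2 = 1 ∨
        (v 0) ^ 2 + x * v 0 * v 1 - (v 1) ^ 2 = -1) →
      ∃ B ∈ HA A, (B : Matrix (Fin 2) (Fin 2) ℤ).mulVec v = ![1, 0] := by
  intro n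
  induction n with
  | zero =>
    intro v hm hQ
    push_cast at hm
    have h0 : v 0 = 0 := by
      have : v 0 ^ 2 = 0 :=
        le_antisymm (by nlinarith [sq_nonneg (v 1)]) (sq_nonneg _)
      exact pow_eq_zero_iff (n := 2) (by norm_num) |>.mp this
    have h1 : v 1 = 0 := by
      have : v 1 ^ 2 = 0 :=
        le_antisymm (by nlinarith [sq_nonneg (v 0)]) (sq_nonneg _)
      exact pow_eq_zero_iff (n := 2) (by norm_num) |>.mp this
    rw [h0, h1] at hQ; norm_num at hQ
  | succ n ih =>
    intro v hm hQ
    push_cast at hm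
    by_cases hb : v 1 = 0
    · -- base case: v = (±1, 0)
      have ha2 : v 0 ^ 2 = 1 := by
        rcases hQ with h | h
        · rw [hb] at h; nlinarith
        · rw [hb] at h; nlinarith [sq_nonneg (v 0)]
      have ha : v 0 = 1 ∨ v 0 = -1 :=
        Int.isUnit_iff.mp (IsUnit.of_mul_eq_one (a := v 0) (v 0) (by nlinarith))
      rcases ha with ha | ha
      · refine ⟨1, one_mem _, ?_⟩
        rw [Units.val_one, Matrix.one_mulVec]
        funext i; fin_cases i <;> simp [ha, hb]
      · refine ⟨-1, memNeg A, ?_⟩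
        rw [Units.val_neg, Units.val_one, Matrix.neg_mulVec, Matrix.one_mulVec]
        funext i; fin_cases i <;> simp [ha, hb]
    · by_cases ha : v 0 = 0
      · -- v = (0, ±1)
        have hb2 : v 1 ^ 2 = 1 := by
          rcases hQ with h | h
          · rw [ha] at h; nlinarith [sq_nonneg (v 1)]
          · rw [ha] at h; nlinarith
        have hbv : v 1 = 1 ∨ v 1 = -1 :=
          Int.isUnit_iff.mp (IsUnit.of_mul_eq_one (a := v 1) (v 1) (by nlinarith))
        rcases hbv with hbv | hbv
        · refine ⟨A⁻¹, inv_mem (memA A), ?_⟩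
          rw [coeAinv x A hA, mvAinv]
          funext i; fin_cases i <;> simp [ha, hbv]
        · refine ⟨(-1) * A⁻¹, mul_mem (memNeg A) (inv_mem (memA A)), ?_⟩
          rw [Units.val_mul, Units.val_neg, Units.val_one, neg_one_mul,
            Matrix.neg_mulVec, coeAinv x A hA, mvAinv]
          funext i; fin_cases i <;> simp [ha, hbv]
      · -- both coordinates nonzero
        have ha2 : 1 ≤ (v 0) ^ 2 := by
          have h := sq_nonneg (v 0)
          rcases h.lt_or_eq with h' | h'
          · exact h'
          · exact absurd (pow_eq_zero_iff (n := 2) (by norm_num) |>.mp h'.symm) ha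
        have hb2 : 1 ≤ (v 1) ^ 2 := by
          have h := sq_nonneg (v 1)
          rcases h.lt_or_eq with h' | h'
          · exact h'
          · exact absurd (pow_eq_zero_iff (n := 2) (by norm_num) |>.mp h'.symm) hb
        rcases lt_trichotomy ((v 0) ^ 2) ((v 1) ^ 2) with hlt | heq | hgt
        · -- |v0| < |v1| : apply A⁻¹, w = (-x v0 + v1, v0)
          have h3 : (v 0) ^ 2 + 1 ≤ (v 1) ^ 2 := Int.add_one_le_iff.mpr hlt
          have hstep : (-x * v 0 + v 1) ^ 2 < (v 1) ^ 2 := by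
            rcases hQ with h | h
            · -- b*c = a^2 - 1
              have hc : v 1 * (-x * v 0 + v 1) = (v 0) ^ 2 - 1 := by linear_combination -h
              have hc2 : (v 1) ^ 2 * (-x * v 0 + v 1) ^ 2 = ((v 0) ^ 2 - 1) ^ 2 := by
                linear_combination (v 1 * (-x * v 0 + v 1) + (v 0) ^ 2 - 1) * hc
              nlinarith [hc2, h3, ha2, sq_nonneg (v 1), sq_nonneg (-x * v 0 + v 1),
                mul_nonneg (sq_nonneg (v 1)) (sq_nonneg (-x * v 0 + v 1))]
            · -- b*c = a^2 + 1, need x ≠ 0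
              have hc : v 1 * (-x * v 0 + v 1) = (v 0) ^ 2 + 1 := by linear_combination -h
              have hxa : 1 ≤ (x * v 0) ^ 2 := by
                have h0 : x * v 0 ≠ 0 := mul_ne_zero hx ha
                have h1 := sq_nonneg (x * v 0)
                rcases h1.lt_or_eq with h' | h'
                · exact h'
                · exact absurd (pow_eq_zero_iff (n := 2) (by norm_num) |>.mp h'.symm) h0
              have hd : (v 1 - (-x * v 0 + v 1)) ^ 2 = (x * v 0) ^ 2 := by ring
              nlinarith [hc, h3, ha2, hxa, hd, sq_nonneg (v 1 - (-x * v 0 + v 1)),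
                sq_nonneg (v 1 + (-x * v 0 + v 1)),
                mul_nonneg (sub_nonneg.mpr h3) (sq_nonneg (v 1))]
          obtain ⟨B, hB, hBe⟩ := ih ![-x * v 0 + v 1, v 0]
            (by
              simp only [Matrix.cons_val_zero, Matrix.cons_val_one, Matrix.head_cons]
              linarith)
            (by
              simp only [Matrix.cons_val_zero, Matrix.cons_val_one, Matrix.head_cons]
              rcases hQ with h | h
              · exact Or.inr (by linear_combination -h)
              · exact Or.inl (by linear_combination -h))
          refine ⟨B * A⁻¹, mul_mem hB (inv_mem (memA A)), ?_⟩
          rw [Units.val_mul, ← Matrix.mulVec_mulVec, coeAinv x A hA, mvAinv]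
          exact hBe
        · -- |v0| = |v1| : special small case
          rcases hQ with h | h
          · -- x*a*b = 1, so b - x*a = 0 ; apply A⁻¹
            have hxab : x * v 0 * v 1 = 1 := by linear_combination h - heq
            have hbu : v 1 = 1 ∨ v 1 = -1 :=
              Int.isUnit_iff.mp (IsUnit.of_mul_eq_one (a := v 1) (x * v 0)
                (by linear_combination hxab))
            have hzero : -x * v 0 + v 1 = 0 := by
              rcases hbu with h1 | h1 <;> rw [h1] at hxab ⊢ <;> linarith
            have hb1 : (v 1) ^ 2 = 1 := by rcases hbu with h1 | h1 <;> rw [h1] <;> norm_num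
            obtain ⟨B, hB, hBe⟩ := ih ![-x * v 0 + v 1, v 0]
              (by
                simp only [Matrix.cons_val_zero, Matrix.cons_val_one, Matrix.head_cons]
                rw [hzero]
                have : (v 0) ^ 2 = 1 := by rw [heq]; exact hb1
                linarith)
              (by
                simp only [Matrix.cons_val_zero, Matrix.cons_val_one, Matrix.head_cons]
                exact Or.inr (by linear_combination -h))
            refine ⟨B * A⁻¹, mul_mem hB (inv_mem (memA A)), ?_⟩
            rw [Units.val_mul, ← Matrix.mulVec_mulVec, coeAinv x A hA, mvAinv]
            exact hBe
          · -- x*a*b = -1, so a + x*b = 0 ; apply A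
            have hxab : x * v 0 * v 1 = -1 := by linear_combination h - heq
            have hau : v 0 = 1 ∨ v 0 = -1 :=
              Int.isUnit_iff.mp (IsUnit.of_mul_eq_one (a := v 0) (-(x * v 1))
                (by linear_combination -hxab))
            have hzero : v 0 + x * v 1 = 0 := by
              rcases hau with h1 | h1 <;> rw [h1] at hxab ⊢ <;> linarith
            have ha1 : (v 0) ^ 2 = 1 := by rcases hau with h1 | h1 <;> rw [h1] <;> norm_num
            obtain ⟨B, hB, hBe⟩ := ih ![v 1, v 0 + x * v 1]
              (by
                simp only [Matrix.cons_val_zero, Matrix.cons_val_one, Matrix.head_cons]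
                rw [hzero]
                have : (v 1) ^ 2 = 1 := by rw [← heq]; exact ha1
                linarith)
              (by
                simp only [Matrix.cons_val_zero, Matrix.cons_val_one, Matrix.head_cons]
                exact Or.inl (by linear_combination -h))
            refine ⟨B * A, mul_mem hB (memA A), ?_⟩
            rw [Units.val_mul, ← Matrix.mulVec_mulVec, hA, mvA]
            exact hBe
        · -- |v0| > |v1| : apply A, w = (v1, v0 + x v1)
          have h3 : (v 1) ^ 2 + 1 ≤ (v 0) ^ 2 := Int.add_one_le_iff.mpr hgt
          have hstep : (v 0 + x * v 1) ^ 2 < (v 0) ^ 2 := by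
            rcases hQ with h | h
            · -- a*d = b^2 + 1, need x ≠ 0
              have hc : v 0 * (v 0 + x * v 1) = (v 1) ^ 2 + 1 := by linear_combination h
              have hxb : 1 ≤ (x * v 1) ^ 2 := by
                have h0 : x * v 1 ≠ 0 := mul_ne_zero hx hb
                have h1 := sq_nonneg (x * v 1)
                rcases h1.lt_or_eq with h' | h'
                · exact h'
                · exact absurd (pow_eq_zero_iff (n := 2) (by norm_num) |>.mp h'.symm) h0
              have hd : (v 0 + x * v 1 - v 0) ^ 2 = (x * v 1) ^ 2 := by ring
              nlinarith [hc, h3, hb2, hxb, hd, sq_nonneg (v 0 - (v 0 + x * v 1)),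
                sq_nonneg (v 0 + (v 0 + x * v 1)),
                mul_nonneg (sub_nonneg.mpr h3) (sq_nonneg (v 0))]
            · -- a*d = b^2 - 1
              have hc : v 0 * (v 0 + x * v 1) = (v 1) ^ 2 - 1 := by linear_combination h
              have hc2 : (v 0) ^ 2 * (v 0 + x * v 1) ^ 2 = ((v 1) ^ 2 - 1) ^ 2 := by
                linear_combination (v 0 * (v 0 + x * v 1) + (v 1) ^ 2 - 1) * hc
              nlinarith [hc2, h3, hb2, sq_nonneg (v 0), sq_nonneg (v 0 + x * v 1),
                mul_nonneg (sq_nonneg (v 0)) (sq_nonneg (v 0 + x * v 1))]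
          obtain ⟨B, hB, hBe⟩ := ih ![v 1, v 0 + x * v 1]
            (by
              simp only [Matrix.cons_val_zero, Matrix.cons_val_one, Matrix.head_cons]
              linarith)
            (by
              simp only [Matrix.cons_val_zero, Matrix.cons_val_one, Matrix.head_cons]
              rcases hQ with h | h
              · exact Or.inr (by linear_combination -h)
              · exact Or.inl (by linear_combination -h))
          refine ⟨B * A, mul_mem hB (memA A), ?_⟩
          rw [Units.val_mul, ← Matrix.mulVec_mulVec, hA, mvA]
          exact hBe

theorem case_orientation_reversing (x : ℤ) (hx : x ≠ 0) (A : GL2Z)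
    (hA : (A : Matrix (Fin 2) (Fin 2) ℤ) = !![0, 1; 1, x]) :
    SA A = {v : Fin 2 → ℤ |
      (v 0) ^ 2 + x * v 0 * v 1 - (v 1) ^ 2 = 1 ∨
      (v 0) ^ 2 + x * v 0 * v 1 - (v 1) ^ 2 = -1} ∧
    (∀ v ∈ SA A, ∀ w ∈ SA A,
      ∃ B ∈ HA A, (B : Matrix (Fin 2) (Fin 2) ℤ).mulVec v = w) := by
  have hpart1 : SA A = {v : Fin 2 → ℤ |
      (v 0) ^ 2 + x * v 0 * v 1 - (v 1) ^ 2 = 1 ∨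
      (v 0) ^ 2 + x * v 0 * v 1 - (v 1) ^ 2 = -1} := by
    ext v
    simp only [SA, Set.mem_setOf_eq, hA, mvA]
    constructor
    · intro h
      have he0 : (![1, 0] : Fin 2 → ℤ) ∈
          Submodule.span ℤ ({v, ![v 1, v 0 + x * v 1]} : Set (Fin 2 → ℤ)) :=
        h ▸ Submodule.mem_top
      have he1 : (![0, 1] : Fin 2 → ℤ) ∈
          Submodule.span ℤ ({v, ![v 1, v 0 + x * v 1]} : Set (Fin 2 → ℤ)) :=
        h ▸ Submodule.mem_top
      rw [Submodule.mem_span_pair] at he0 he1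
      obtain ⟨m, nn, hmn⟩ := he0
      obtain ⟨p, q, hpq⟩ := he1
      have E1 := congrFun hmn 0
      have E2 := congrFun hmn 1
      have E3 := congrFun hpq 0
      have E4 := congrFun hpq 1
      simp only [Pi.add_apply, Pi.smul_apply, smul_eq_mul, Matrix.cons_val_zero,
        Matrix.cons_val_one, Matrix.head_cons] at E1 E2 E3 E4
      have key : ((v 0) ^ 2 + x * v 0 * v 1 - (v 1) ^ 2) * (m * q - nn * p) = 1 := by
        linear_combination (p * v 1 + q * (v 0 + x * v 1)) * E1 - (p * v 0 + q * v 1) * E2 + E4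
      exact Int.isUnit_iff.mp (IsUnit.of_mul_eq_one _ key)
    · intro hQ
      have hQQ : ((v 0) ^ 2 + x * v 0 * v 1 - (v 1) ^ 2) *
          ((v 0) ^ 2 + x * v 0 * v 1 - (v 1) ^ 2) = 1 := by
        rcases hQ with h | h <;> rw [h] <;> norm_num
      rw [eq_top_iff]
      rintro u -
      have h0 : (![1, 0] : Fin 2 → ℤ) ∈
          Submodule.span ℤ ({v, ![v 1, v 0 + x * v 1]} : Set (Fin 2 → ℤ)) := by
        rw [Submodule.mem_span_pair]
        refine ⟨((v 0) ^ 2 + x * v 0 * v 1 - (v 1) ^ 2) * (v 0 + x * v 1),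
          -(((v 0) ^ 2 + x * v 0 * v 1 - (v 1) ^ 2) * v 1), ?_⟩
        funext i; fin_cases i
        · show ((v 0) ^ 2 + x * v 0 * v 1 - (v 1) ^ 2) * (v 0 + x * v 1) * v 0 +
            -(((v 0) ^ 2 + x * v 0 * v 1 - (v 1) ^ 2) * v 1) * v 1 = 1
          linear_combination hQQ
        · show ((v 0) ^ 2 + x * v 0 * v 1 - (v 1) ^ 2) * (v 0 + x * v 1) * v 1 +
            -(((v 0) ^ 2 + x * v 0 * v 1 - (v 1) ^ 2) * v 1) * (v 0 + x * v 1) = 0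
          ring
      have h1 : (![0, 1] : Fin 2 → ℤ) ∈
          Submodule.span ℤ ({v, ![v 1, v 0 + x * v 1]} : Set (Fin 2 → ℤ)) := by
        rw [Submodule.mem_span_pair]
        refine ⟨-(((v 0) ^ 2 + x * v 0 * v 1 - (v 1) ^ 2) * v 1),
          ((v 0) ^ 2 + x * v 0 * v 1 - (v 1) ^ 2) * v 0, ?_⟩
        funext i; fin_cases i
        · show -(((v 0) ^ 2 + x * v 0 * v 1 - (v 1) ^ 2) * v 1) * v 0 +
            ((v 0) ^ 2 + x * v 0 * v 1 - (v 1) ^ 2) * v 0 * v 1 = 0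
          ring
        · show -(((v 0) ^ 2 + x * v 0 * v 1 - (v 1) ^ 2) * v 1) * v 1 +
            ((v 0) ^ 2 + x * v 0 * v 1 - (v 1) ^ 2) * v 0 * (v 0 + x * v 1) = 1
          linear_combination hQQ
      have hu : u = u 0 • (![1, 0] : Fin 2 → ℤ) + u 1 • (![0, 1] : Fin 2 → ℤ) := by
        funext i; fin_cases i <;> simp
      rw [hu]
      exact add_mem (Submodule.smul_mem _ _ h0) (Submodule.smul_mem _ _ h1)
  refine ⟨hpart1, ?_⟩
  intro v hv w hw
  rw [hpart1] at hv hw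
  simp only [Set.mem_setOf_eq] at hv hw
  obtain ⟨Bv, hBv, hBve⟩ := reach x hx A hA ((v 0) ^ 2 + (v 1) ^ 2).toNat v
    (Int.self_le_toNat _) hv
  obtain ⟨Bw, hBw, hBwe⟩ := reach x hx A hA ((w 0) ^ 2 + (w 1) ^ 2).toNat w
    (Int.self_le_toNat _) hw
  refine ⟨Bw⁻¹ * Bv, mul_mem (inv_mem hBw) hBv, ?_⟩
  rw [Units.val_mul, ← Matrix.mulVec_mulVec, hBve, ← hBwe, Matrix.mulVec_mulVec,
    Units.inv_mul, Matrix.one_mulVec]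
end

section
/- Let x ∈ {3, −3} and A = (0 −1; 1 x) ∈ GL₂ℤ. Then the action of the subgroup H_A of GL₂ℤ generated by A and −Id on the set S_A = {v ∈ ℤ² : ℤv + ℤ(Av) = ℤ²} has exactly two orbits. For x = 3, the two orbits are the H_A-orbits of (1,0) and of (−1,1), and these orbits are disjoint. -/
open Matrix

/-- `v` and `w` lie in the same `H_A`-orbit. -/
def SameOrbit (A : GL2Z) (v w : Fin 2 → ℤ) : Prop :=
  ∃ B ∈ HA A, (B : Matrix (Fin 2) (Fin 2) ℤ).mulVec v = w

/- ### Auxiliary material -/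

/-- The quadratic form `a² + x·a·b + b²`, the determinant of `(v, Av)`. -/
def Qf (x : ℤ) (v : Fin 2 → ℤ) : ℤ := v 0 * v 0 + x * v 0 * v 1 + v 1 * v 1

lemma span_pair_top_iff (v w : Fin 2 → ℤ) :
    Submodule.span ℤ {v, w} = ⊤ ↔
      (v 0 * w 1 - v 1 * w 0 = 1 ∨ v 0 * w 1 - v 1 * w 0 = -1) := by
  constructor
  · intro h
    have h0 : (![1,0] : Fin 2 → ℤ) ∈ Submodule.span ℤ {v, w} := by rw [h]; trivial
    have h1 : (![0,1] : Fin 2 → ℤ) ∈ Submodule.span ℤ {v, w} := by rw [h]; trivial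
    obtain ⟨m, n, hmn⟩ := Submodule.mem_span_pair.mp h0
    obtain ⟨p, q, hpq⟩ := Submodule.mem_span_pair.mp h1
    have e00 := congrFun hmn 0
    have e01 := congrFun hmn 1
    have e10 := congrFun hpq 0
    have e11 := congrFun hpq 1
    simp only [Pi.add_apply, Pi.smul_apply, smul_eq_mul, Matrix.cons_val_zero,
      Matrix.cons_val_one, Matrix.head_cons] at e00 e01 e10 e11
    have key : (m * q - n * p) * (v 0 * w 1 - v 1 * w 0)
        = (m * v 0 + n * w 0) * (p * v 1 + q * w 1)
          - (m * v 1 + n * w 1) * (p * v 0 + q * w 0) := by ring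
    rw [e00, e01, e10, e11] at key
    have hu : IsUnit (v 0 * w 1 - v 1 * w 0) :=
      IsUnit.of_mul_eq_one (a := v 0 * w 1 - v 1 * w 0) (m * q - n * p) (by linear_combination key)
    exact Int.isUnit_iff.mp hu
  · intro h
    have main : ∀ ε : ℤ, ε * (v 0 * w 1 - v 1 * w 0) = 1 →
        Submodule.span ℤ {v, w} = ⊤ := by
      intro ε hε
      have h0 : (![1,0] : Fin 2 → ℤ) ∈ Submodule.span ℤ {v, w} := by
        refine Submodule.mem_span_pair.mpr ⟨ε * w 1, -(ε * v 1), ?_⟩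
        refine funext (Fin.forall_fin_two.mpr ⟨?_, ?_⟩) <;>
          simp only [Pi.add_apply, Pi.smul_apply, smul_eq_mul, Matrix.cons_val_zero,
            Matrix.cons_val_one, Matrix.head_cons]
        · linear_combination hε
        · ring
      have h1 : (![0,1] : Fin 2 → ℤ) ∈ Submodule.span ℤ {v, w} := by
        refine Submodule.mem_span_pair.mpr ⟨-(ε * w 0), ε * v 0, ?_⟩
        refine funext (Fin.forall_fin_two.mpr ⟨?_, ?_⟩) <;>
          simp only [Pi.add_apply, Pi.smul_apply, smul_eq_mul, Matrix.cons_val_zero,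
            Matrix.cons_val_one, Matrix.head_cons]
        · ring
        · linear_combination hε
      rw [eq_top_iff]
      rintro u -
      have hu : u = u 0 • (![1,0] : Fin 2 → ℤ) + u 1 • ![0,1] := by
        refine funext (Fin.forall_fin_two.mpr ⟨?_, ?_⟩) <;> simp
      rw [hu]
      exact Submodule.add_mem _ (Submodule.smul_mem _ _ h0) (Submodule.smul_mem _ _ h1)
    rcases h with h | h
    · exact main 1 (by linarith)
    · exact main (-1) (by linarith)

lemma mulVecA (x : ℤ) (A : GL2Z) (hA : (A : Matrix (Fin 2) (Fin 2) ℤ) = !![0, -1; 1, x])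
    (v : Fin 2 → ℤ) :
    (A : Matrix (Fin 2) (Fin 2) ℤ).mulVec v = ![-(v 1), v 0 + x * v 1] := by
  rw [hA]
  refine funext (Fin.forall_fin_two.mpr ⟨?_, ?_⟩) <;>
    simp [Matrix.mulVec, dotProduct, Fin.sum_univ_two] <;> ring

lemma mem_SA_iff (x : ℤ) (A : GL2Z) (hA : (A : Matrix (Fin 2) (Fin 2) ℤ) = !![0, -1; 1, x])
    (v : Fin 2 → ℤ) : v ∈ SA A ↔ (Qf x v = 1 ∨ Qf x v = -1) := by
  have h : v ∈ SA A ↔ Submodule.span ℤ {v, ![-(v 1), v 0 + x * v 1]} = ⊤ := by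
    rw [SA, Set.mem_setOf_eq, mulVecA x A hA]
  rw [h, span_pair_top_iff]
  have e : v 0 * (![-(v 1), v 0 + x * v 1] : Fin 2 → ℤ) 1
      - v 1 * (![-(v 1), v 0 + x * v 1] : Fin 2 → ℤ) 0 = Qf x v := by
    simp [Qf] <;> ring
  rw [e]

lemma so_refl (A : GL2Z) (v : Fin 2 → ℤ) : SameOrbit A v v :=
  ⟨1, one_mem _, by rw [Units.val_one, Matrix.one_mulVec]⟩

lemma so_symm {A : GL2Z} {v w : Fin 2 → ℤ} (h : SameOrbit A v w) : SameOrbit A w v := by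
  obtain ⟨B, hB, rfl⟩ := h
  exact ⟨B⁻¹, inv_mem hB, by rw [Matrix.mulVec_mulVec, Units.inv_mul, Matrix.one_mulVec]⟩

lemma so_trans {A : GL2Z} {u v w : Fin 2 → ℤ} (h1 : SameOrbit A u v) (h2 : SameOrbit A v w) :
    SameOrbit A u w := by
  obtain ⟨B, hB, rfl⟩ := h1
  obtain ⟨C, hC, rfl⟩ := h2
  exact ⟨C * B, mul_mem hC hB, by rw [Matrix.mulVec_mulVec, Units.val_mul]⟩

lemma so_congr {A : GL2Z} {v v' w w' : Fin 2 → ℤ} (hv : v = v') (hw : w = w')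
    (h : SameOrbit A v w) : SameOrbit A v' w' := hv ▸ hw ▸ h

lemma so_stepA (x : ℤ) (A : GL2Z) (hA : (A : Matrix (Fin 2) (Fin 2) ℤ) = !![0, -1; 1, x])
    (v : Fin 2 → ℤ) : SameOrbit A v ![-(v 1), v 0 + x * v 1] :=
  ⟨A, Subgroup.subset_closure (Set.mem_insert _ _), mulVecA x A hA v⟩

lemma so_stepAinv (x : ℤ) (A : GL2Z) (hA : (A : Matrix (Fin 2) (Fin 2) ℤ) = !![0, -1; 1, x])
    (v : Fin 2 → ℤ) : SameOrbit A v ![x * v 0 + v 1, -(v 0)] := by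
  apply so_symm
  have h := so_stepA x A hA ![x * v 0 + v 1, -(v 0)]
  refine so_congr rfl ?_ h
  refine funext (Fin.forall_fin_two.mpr ⟨?_, ?_⟩) <;> simp <;> ring

lemma so_neg (A : GL2Z) (v : Fin 2 → ℤ) : SameOrbit A v (-v) :=
  ⟨-1, Subgroup.subset_closure (Set.mem_insert_of_mem _ rfl), by
    rw [Units.val_neg, Units.val_one, Matrix.neg_mulVec, Matrix.one_mulVec]⟩

lemma Q_inv (x : ℤ) (A : GL2Z) (hA : (A : Matrix (Fin 2) (Fin 2) ℤ) = !![0, -1; 1, x]) :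
    ∀ B : GL2Z, B ∈ HA A → ∀ v : Fin 2 → ℤ,
      Qf x ((B : Matrix (Fin 2) (Fin 2) ℤ).mulVec v) = Qf x v := by
  intro B hB
  refine Subgroup.closure_induction ?_ ?_ ?_ ?_ hB
  · intro g hg
    rcases hg with rfl | rfl
    · intro v
      rw [mulVecA x g hA]
      simp [Qf] <;> ring
    · intro v
      rw [Units.val_neg, Units.val_one, Matrix.neg_mulVec, Matrix.one_mulVec]
      simp [Qf] <;> ring
  · intro v
    rw [Units.val_one, Matrix.one_mulVec]
  · intro g h _ _ pg ph v
    rw [Units.val_mul, ← Matrix.mulVec_mulVec, pg, ph]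
  · intro g _ pg v
    have h2 := pg (((g⁻¹ : GL2Z) : Matrix (Fin 2) (Fin 2) ℤ).mulVec v)
    rw [Matrix.mulVec_mulVec, Units.mul_inv, Matrix.one_mulVec] at h2
    exact h2.symm

lemma so_Q_eq (x : ℤ) (A : GL2Z) (hA : (A : Matrix (Fin 2) (Fin 2) ℤ) = !![0, -1; 1, x])
    {v w : Fin 2 → ℤ} (h : SameOrbit A v w) : Qf x v = Qf x w := by
  obtain ⟨B, hB, rfl⟩ := h
  exact (Q_inv x A hA B hB v).symm

/-- The key descent lemma: classification of the orbits for `x = 3`. -/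
lemma descent (A : GL2Z) (hA : (A : Matrix (Fin 2) (Fin 2) ℤ) = !![0, -1; 1, (3:ℤ)]) :
    ∀ n : ℕ, ∀ v : Fin 2 → ℤ, (v 0).natAbs + (v 1).natAbs ≤ n →
      (Qf 3 v = 1 → SameOrbit A ![1, 0] v) ∧ (Qf 3 v = -1 → SameOrbit A ![-1, 1] v) := by
  intro n
  induction n with
  | zero =>
    intro v hv
    have h0 : v 0 = 0 := by omega
    have h1 : v 1 = 0 := by omega
    constructor <;> intro h <;> simp [Qf, h0, h1] at h
  | succ n ih =>
    intro v hv
    rcases lt_trichotomy (v 1) 0 with hb | hb | hb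
    · rcases lt_trichotomy (v 0) 0 with ha | ha | ha
      · -- both negative: |Q| ≥ 5
        constructor <;> intro h <;> exfalso <;> simp only [Qf] at h <;>
          nlinarith [mul_pos (neg_pos.mpr ha) (neg_pos.mpr hb)]
      · -- v 0 = 0 : Q = v1² , v1 < 0 so v = ![0, -1]
        constructor <;> intro h <;> simp only [Qf, ha] at h
        · have hb1 : v 1 = -1 := by nlinarith
          have h1 : SameOrbit A ![1,0] ![0,1] := by
            refine so_congr rfl ?_ (so_stepA 3 A hA ![1,0])
            refine funext (Fin.forall_fin_two.mpr ⟨?_, ?_⟩) <;> norm_num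
          have h2 : SameOrbit A ![0,1] v := by
            refine so_congr rfl ?_ (so_neg A ![0,1])
            refine funext (Fin.forall_fin_two.mpr ⟨?_, ?_⟩) <;> simp <;> omega
          exact so_trans h1 h2
        · exfalso; nlinarith
      · -- v 0 > 0, v 1 < 0 : the main case
        by_cases hc1 : 3 * (-(v 1)) < 2 * v 0
        · -- reduce via A
          set w : Fin 2 → ℤ := ![-(v 1), v 0 + 3 * v 1] with hw
          have hw0 : w 0 = -(v 1) := rfl
          have hw1 : w 1 = v 0 + 3 * v 1 := rfl
          have hsize : (w 0).natAbs + (w 1).natAbs ≤ n := by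
            rw [hw0, hw1]; omega
          have hQw : Qf 3 w = Qf 3 v := by simp only [Qf, hw0, hw1]; ring
          have hstep : SameOrbit A v w := so_stepA 3 A hA v
          obtain ⟨ih1, ih2⟩ := ih w hsize
          constructor <;> intro h
          · exact so_trans (ih1 (by rw [hQw]; exact h)) (so_symm hstep)
          · exact so_trans (ih2 (by rw [hQw]; exact h)) (so_symm hstep)
        · by_cases hc2 : 2 * (-(v 1)) > 3 * v 0
          · -- reduce via A⁻¹
            set w : Fin 2 → ℤ := ![3 * v 0 + v 1, -(v 0)] with hw
            have hw0 : w 0 = 3 * v 0 + v 1 := rfl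
            have hw1 : w 1 = -(v 0) := rfl
            have hsize : (w 0).natAbs + (w 1).natAbs ≤ n := by
              rw [hw0, hw1]; omega
            have hQw : Qf 3 w = Qf 3 v := by simp only [Qf, hw0, hw1]; ring
            have hstep : SameOrbit A v w := so_stepAinv 3 A hA v
            obtain ⟨ih1, ih2⟩ := ih w hsize
            constructor <;> intro h
            · exact so_trans (ih1 (by rw [hQw]; exact h)) (so_symm hstep)
            · exact so_trans (ih2 (by rw [hQw]; exact h)) (so_symm hstep)
          · -- middle zone: v = ![1, -1]
            push_neg at hc1 hc2
            constructor <;> intro h <;> simp only [Qf] at h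
            · exfalso
              nlinarith [mul_nonneg (by linarith : (0:ℤ) ≤ 3 * (-(v 1)) - 2 * v 0)
                (by linarith : (0:ℤ) ≤ 3 * v 0 - 2 * (-(v 1))), mul_pos ha (neg_pos.mpr hb)]
            · have hsum : v 0 + -(v 1) ≤ 2 := by
                nlinarith [mul_nonneg (by linarith : (0:ℤ) ≤ 3 * (-(v 1)) - 2 * v 0)
                  (by linarith : (0:ℤ) ≤ 3 * v 0 - 2 * (-(v 1)))]
              have ha1 : v 0 = 1 := by omega
              have hb1 : v 1 = -1 := by omega
              refine so_congr rfl ?_ (so_neg A ![-1,1])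
              refine funext (Fin.forall_fin_two.mpr ⟨?_, ?_⟩) <;> simp <;> omega
    · -- v 1 = 0 : Q = v0²
      constructor <;> intro h <;> simp only [Qf, hb] at h
      · have hor : v 0 = 1 ∨ v 0 = -1 :=
          Int.isUnit_iff.mp (IsUnit.of_mul_eq_one (a := _) (v 0) (by linarith))
        rcases hor with ha1 | ha1
        · refine so_congr rfl ?_ (so_refl A ![1,0])
          refine funext (Fin.forall_fin_two.mpr ⟨?_, ?_⟩) <;> simp <;> omega
        · refine so_congr rfl ?_ (so_neg A ![1,0])
          refine funext (Fin.forall_fin_two.mpr ⟨?_, ?_⟩) <;> simp <;> omega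
      · exfalso; nlinarith
    · rcases lt_trichotomy (v 0) 0 with ha | ha | ha
      · -- v 0 < 0, v 1 > 0 : the mirror main case
        by_cases hc1 : 3 * v 1 < 2 * (-(v 0))
        · set w : Fin 2 → ℤ := ![-(v 1), v 0 + 3 * v 1] with hw
          have hw0 : w 0 = -(v 1) := rfl
          have hw1 : w 1 = v 0 + 3 * v 1 := rfl
          have hsize : (w 0).natAbs + (w 1).natAbs ≤ n := by
            rw [hw0, hw1]; omega
          have hQw : Qf 3 w = Qf 3 v := by simp only [Qf, hw0, hw1]; ring
          have hstep : SameOrbit A v w := so_stepA 3 A hA v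
          obtain ⟨ih1, ih2⟩ := ih w hsize
          constructor <;> intro h
          · exact so_trans (ih1 (by rw [hQw]; exact h)) (so_symm hstep)
          · exact so_trans (ih2 (by rw [hQw]; exact h)) (so_symm hstep)
        · by_cases hc2 : 2 * v 1 > 3 * (-(v 0))
          · set w : Fin 2 → ℤ := ![3 * v 0 + v 1, -(v 0)] with hw
            have hw0 : w 0 = 3 * v 0 + v 1 := rfl
            have hw1 : w 1 = -(v 0) := rfl
            have hsize : (w 0).natAbs + (w 1).natAbs ≤ n := by
              rw [hw0, hw1]; omega
            have hQw : Qf 3 w = Qf 3 v := by simp only [Qf, hw0, hw1]; ring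
            have hstep : SameOrbit A v w := so_stepAinv 3 A hA v
            obtain ⟨ih1, ih2⟩ := ih w hsize
            constructor <;> intro h
            · exact so_trans (ih1 (by rw [hQw]; exact h)) (so_symm hstep)
            · exact so_trans (ih2 (by rw [hQw]; exact h)) (so_symm hstep)
          · -- middle zone: v = ![-1, 1]
            push_neg at hc1 hc2
            constructor <;> intro h <;> simp only [Qf] at h
            · exfalso
              nlinarith [mul_nonneg (by linarith : (0:ℤ) ≤ 3 * v 1 - 2 * (-(v 0)))
                (by linarith : (0:ℤ) ≤ 3 * (-(v 0)) - 2 * v 1), mul_pos (neg_pos.mpr ha) hb]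
            · have hsum : -(v 0) + v 1 ≤ 2 := by
                nlinarith [mul_nonneg (by linarith : (0:ℤ) ≤ 3 * v 1 - 2 * (-(v 0)))
                  (by linarith : (0:ℤ) ≤ 3 * (-(v 0)) - 2 * v 1)]
              have ha1 : v 0 = -1 := by omega
              have hb1 : v 1 = 1 := by omega
              refine so_congr rfl ?_ (so_refl A ![-1,1])
              refine funext (Fin.forall_fin_two.mpr ⟨?_, ?_⟩) <;> simp <;> omega
      · -- v 0 = 0, v 1 > 0 : v = ![0,1]
        constructor <;> intro h <;> simp only [Qf, ha] at h
        · have hb1 : v 1 = 1 := by nlinarith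
          refine so_congr rfl ?_ (so_stepA 3 A hA ![1,0])
          refine funext (Fin.forall_fin_two.mpr ⟨?_, ?_⟩) <;> simp <;> omega
        · exfalso; nlinarith
      · -- both positive: |Q| ≥ 5
        constructor <;> intro h <;> exfalso <;> simp only [Qf] at h <;>
          nlinarith [mul_pos ha hb]

/- ### The conjugation `D = diag(1, -1)` relating `x = -3` to `x = 3` -/

def Dmat : GL2Z :=
  ⟨!![1,0;0,-1], !![1,0;0,-1],
    by rw [Matrix.one_fin_two]; norm_num [Matrix.mul_fin_two],
    by rw [Matrix.one_fin_two]; norm_num [Matrix.mul_fin_two]⟩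

def A3 : GL2Z :=
  ⟨!![0,-1;1,3], !![3,1;-1,0],
    by rw [Matrix.one_fin_two]; norm_num [Matrix.mul_fin_two],
    by rw [Matrix.one_fin_two]; norm_num [Matrix.mul_fin_two]⟩

lemma A3_val : (A3 : Matrix (Fin 2) (Fin 2) ℤ) = !![0,-1;1,(3:ℤ)] := rfl

lemma Dmat_val : (Dmat : Matrix (Fin 2) (Fin 2) ℤ) = !![1,0;0,(-1:ℤ)] := rfl

lemma DD : Dmat * Dmat = 1 := by
  apply Units.ext
  rw [Units.val_mul, Dmat_val, Units.val_one, Matrix.one_fin_two]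
  norm_num [Matrix.mul_fin_two]

lemma Dinv : Dmat⁻¹ = Dmat := inv_eq_of_mul_eq_one_right DD

lemma DDm : (Dmat : Matrix (Fin 2) (Fin 2) ℤ) * Dmat = 1 := by
  have h := congrArg Units.val DD
  rwa [Units.val_mul, Units.val_one] at h

lemma conj_mem (A : GL2Z) (hA : (A : Matrix (Fin 2) (Fin 2) ℤ) = !![0,-1;1,(-3:ℤ)]) :
    ∀ C ∈ HA A3, Dmat * C * Dmat ∈ HA A := by
  have hconj : Dmat * A3 * Dmat = -A := by
    apply Units.ext
    rw [Units.val_mul, Units.val_mul, Units.val_neg, hA, Dmat_val, A3_val]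
    norm_num [Matrix.mul_fin_two]
  intro C hC
  refine Subgroup.closure_induction ?_ ?_ ?_ ?_ hC
  · intro g hg
    rcases hg with rfl | rfl
    · rw [hconj, show -A = -1 * A from (neg_one_mul A).symm]
      exact mul_mem (Subgroup.subset_closure (Set.mem_insert_of_mem _ rfl))
        (Subgroup.subset_closure (Set.mem_insert _ _))
    · have h1 : Dmat * (-1) * Dmat = (-1 : GL2Z) := by
        rw [mul_neg_one, neg_mul, DD]
      rw [h1]
      exact Subgroup.subset_closure (Set.mem_insert_of_mem _ rfl)
  · rw [mul_one, DD]; exact one_mem _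
  · intro g h _ _ pg ph
    have key : Dmat * (g * h) * Dmat = (Dmat * g * Dmat) * (Dmat * h * Dmat) := by
      have h1 : (Dmat * g * Dmat) * (Dmat * h * Dmat)
          = Dmat * (g * ((Dmat * Dmat) * h)) * Dmat := by group
      rw [h1, DD, one_mul]
    rw [key]; exact mul_mem pg ph
  · intro g _ pg
    have key : Dmat * g⁻¹ * Dmat = (Dmat * g * Dmat)⁻¹ := by
      rw [_root_.mul_inv_rev, _root_.mul_inv_rev, Dinv]; group
    rw [key]; exact inv_mem pg

lemma so_transfer (A : GL2Z) (hA : (A : Matrix (Fin 2) (Fin 2) ℤ) = !![0,-1;1,(-3:ℤ)])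
    {p q : Fin 2 → ℤ} (h : SameOrbit A3 p q) :
    SameOrbit A ((Dmat : Matrix (Fin 2) (Fin 2) ℤ).mulVec p)
      ((Dmat : Matrix (Fin 2) (Fin 2) ℤ).mulVec q) := by
  obtain ⟨C, hC, rfl⟩ := h
  refine ⟨Dmat * C * Dmat, conj_mem A hA C hC, ?_⟩
  rw [Matrix.mulVec_mulVec, Matrix.mulVec_mulVec, Units.val_mul, Units.val_mul,
    mul_assoc, DDm, mul_one]

lemma mulVecD (u : Fin 2 → ℤ) :
    (Dmat : Matrix (Fin 2) (Fin 2) ℤ).mulVec u = ![u 0, -(u 1)] := by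
  rw [Dmat_val]
  refine funext (Fin.forall_fin_two.mpr ⟨?_, ?_⟩) <;>
    simp [Matrix.mulVec, dotProduct, Fin.sum_univ_two]

theorem case_x_eq_pm_three (x : ℤ) (hx : x = 3 ∨ x = -3) (A : GL2Z)
    (hA : (A : Matrix (Fin 2) (Fin 2) ℤ) = !![0, -1; 1, x]) :
    (∃ v ∈ SA A, ∃ w ∈ SA A, ¬ SameOrbit A v w ∧
      ∀ u ∈ SA A, SameOrbit A v u ∨ SameOrbit A w u) ∧
    (x = 3 →
      ![1, 0] ∈ SA A ∧ ![-1, 1] ∈ SA A ∧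
      ¬ SameOrbit A ![1, 0] ![-1, 1] ∧
      ∀ u ∈ SA A, SameOrbit A ![1, 0] u ∨ SameOrbit A ![-1, 1] u) := by
  rcases hx with rfl | rfl
  · -- x = 3
    have mem1 : ![1,0] ∈ SA A := (mem_SA_iff 3 A hA _).mpr (Or.inl (by norm_num [Qf]))
    have mem2 : ![-1,1] ∈ SA A := (mem_SA_iff 3 A hA _).mpr (Or.inr (by norm_num [Qf]))
    have hdisj : ¬ SameOrbit A ![1,0] ![-1,1] := by
      intro h
      have h2 := so_Q_eq 3 A hA h
      norm_num [Qf] at h2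
    have hcomp : ∀ u ∈ SA A, SameOrbit A ![1,0] u ∨ SameOrbit A ![-1,1] u := by
      intro u hu
      rcases (mem_SA_iff 3 A hA u).mp hu with h | h
      · exact Or.inl ((descent A hA ((u 0).natAbs + (u 1).natAbs) u le_rfl).1 h)
      · exact Or.inr ((descent A hA ((u 0).natAbs + (u 1).natAbs) u le_rfl).2 h)
    exact ⟨⟨![1,0], mem1, ![-1,1], mem2, hdisj, hcomp⟩, fun _ => ⟨mem1, mem2, hdisj, hcomp⟩⟩
  · -- x = -3
    have mem1 : ![1,0] ∈ SA A := (mem_SA_iff (-3) A hA _).mpr (Or.inl (by norm_num [Qf]))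
    have mem2 : ![-1,-1] ∈ SA A := (mem_SA_iff (-3) A hA _).mpr (Or.inr (by norm_num [Qf]))
    have hdisj : ¬ SameOrbit A ![1,0] ![-1,-1] := by
      intro h
      have h2 := so_Q_eq (-3) A hA h
      norm_num [Qf] at h2
    have hcomp : ∀ u ∈ SA A, SameOrbit A ![1,0] u ∨ SameOrbit A ![-1,-1] u := by
      intro u hu
      have hQu : Qf 3 ![u 0, -(u 1)] = Qf (-3) u := by simp [Qf]
      rcases (mem_SA_iff (-3) A hA u).mp hu with h | h
      · left
        have hso := (descent A3 A3_val
            ((![u 0, -(u 1)] 0).natAbs + ((![u 0, -(u 1)] : Fin 2 → ℤ) 1).natAbs)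
            ![u 0, -(u 1)] le_rfl).1 (by rw [hQu]; exact h)
        have ht := so_transfer A hA hso
        refine so_congr ?_ ?_ ht
        · rw [mulVecD]
          refine funext (Fin.forall_fin_two.mpr ⟨?_, ?_⟩) <;> norm_num
        · rw [mulVecD]
          refine funext (Fin.forall_fin_two.mpr ⟨?_, ?_⟩) <;> simp
      · right
        have hso := (descent A3 A3_val
            ((![u 0, -(u 1)] 0).natAbs + ((![u 0, -(u 1)] : Fin 2 → ℤ) 1).natAbs)
            ![u 0, -(u 1)] le_rfl).2 (by rw [hQu]; exact h)
        have ht := so_transfer A hA hso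
        refine so_congr ?_ ?_ ht
        · rw [mulVecD]
          refine funext (Fin.forall_fin_two.mpr ⟨?_, ?_⟩) <;> norm_num
        · rw [mulVecD]
          refine funext (Fin.forall_fin_two.mpr ⟨?_, ?_⟩) <;> simp
    exact ⟨⟨![1,0], mem1, ![-1,-1], mem2, hdisj, hcomp⟩, fun h3 => absurd h3 (by norm_num)⟩
end
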